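/- Let n and m be natural numbers with n/2 < m < n−1. In the symmetric group Sym_n, the pointwise stabilizer of an (n−m)-element subset (isomorphic to Sym_m) is pronormal but not strongly pronormal. -/

import Mathlib

open Pointwise

/-- `n` is a π-number: every prime dividing `n` lies in `π`. -/
def IsPiNumber (π : Set ℕ) (n : ℕ) : Prop := ∀ p : ℕ, p.Prime → p ∣ n → p ∈ π

/-- `H` is a π-Hall subgroup of `G`. -/
def IsHall (π : Set ℕ) {G : Type*} [Group G] (H : Subgroup G) : Prop :=
  IsPiNumber π (Nat.card H) ∧ ∀ p : ℕ, p.Prime → p ∣ H.index → p ∉ π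

/-- `H` is pronormal in `G`: for every `g`, `H` and `H^g = g⁻¹Hg` are conjugate in `⟨H, H^g⟩`. -/
def Pronormal {G : Type*} [Group G] (H : Subgroup G) : Prop :=
  ∀ g : G, ∃ x ∈ H ⊔ MulAut.conj g⁻¹ • H,
    MulAut.conj x⁻¹ • H = MulAut.conj g⁻¹ • H

/-- `H` is strongly pronormal in `G`. -/
def StronglyPronormal {G : Type*} [Group G] (H : Subgroup G) : Prop :=
  ∀ K : Subgroup G, K ≤ H → ∀ g : G, ∃ x ∈ H ⊔ MulAut.conj g⁻¹ • K,
    MulAut.conj x⁻¹ • (MulAut.conj g⁻¹ • K) ≤ H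

/-- `G` is π-separable. -/
def IsPiSeparable (π : Set ℕ) (G : Type*) [Group G] : Prop :=
  ∃ (n : ℕ) (c : Fin (n + 1) → Subgroup G),
    c 0 = ⊥ ∧ c (Fin.last n) = ⊤ ∧ Monotone c ∧ (∀ i, (c i).Normal) ∧
    ∀ i : Fin n,
      IsPiNumber π (Nat.card (↥(c i.succ) ⧸ (c i.castSucc).subgroupOf (c i.succ))) ∨
      IsPiNumber πᶜ (Nat.card (↥(c i.succ) ⧸ (c i.castSucc).subgroupOf (c i.succ)))

/-- `G` satisfies `C_π`. -/
def SatisfiesC (π : Set ℕ) (G : Type*) [Group G] : Prop :=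
  (∃ H : Subgroup G, IsHall π H) ∧
    ∀ H K : Subgroup G, IsHall π H → IsHall π K → ∃ g : G, MulAut.conj g • H = K


namespace Stmt14Aux

variable {n : ℕ}

def pstab (Δ : Finset (Fin n)) : Subgroup (Equiv.Perm (Fin n)) :=
  ⨅ x ∈ Δ, MulAction.stabilizer (Equiv.Perm (Fin n)) x

lemma mem_pstab {Δ : Finset (Fin n)} {σ : Equiv.Perm (Fin n)} :
    σ ∈ pstab Δ ↔ ∀ x ∈ Δ, σ x = x := by
  simp [pstab, Subgroup.mem_iInf, MulAction.mem_stabilizer_iff, Equiv.Perm.smul_def]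

lemma conj_pstab (c : Equiv.Perm (Fin n)) (Δ : Finset (Fin n)) :
    MulAut.conj c • pstab Δ = pstab (Δ.image c) := by
  ext σ
  rw [Subgroup.mem_pointwise_smul_iff_inv_smul_mem]
  have hsm : (MulAut.conj c)⁻¹ • σ = c⁻¹ * σ * c := by
    simp [MulAut.smul_def]
  rw [hsm]
  simp only [mem_pstab, Finset.mem_image]
  constructor
  · rintro h y ⟨x, hx, rfl⟩
    have := h x hx
    simp only [Equiv.Perm.mul_apply] at this
    have := congrArg c this
    simpa using this
  · intro h x hx
    have := h (c x) ⟨x, hx, rfl⟩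
    simp [Equiv.Perm.mul_apply, this]

lemma pstab_smul_le {A : Finset (Fin n)} {s : Equiv.Perm (Fin n)}
    {J : Subgroup (Equiv.Perm (Fin n))} (hs : s ∈ J) (hA : pstab A ≤ J) :
    pstab (A.image s) ≤ J := by
  intro y hy
  rw [← conj_pstab, Subgroup.mem_pointwise_smul_iff_inv_smul_mem] at hy
  have hsm : (MulAut.conj s)⁻¹ • y = s⁻¹ * y * s := by simp [MulAut.smul_def]
  rw [hsm] at hy
  have : y = s * (s⁻¹ * y * s) * s⁻¹ := by group
  rw [this]
  exact mul_mem (mul_mem hs (hA hy)) (inv_mem hs)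

lemma key (t : Fin n) : ∀ (k : ℕ) (A B : Finset (Fin n)), (B \ A).card = k →
    A.card = B.card → t ∉ A → t ∉ B →
    ∃ x ∈ pstab A ⊔ pstab B, B.image x = A := by
  intro k
  induction k with
  | zero =>
    intro A B h hc _ _
    have hBA : B ⊆ A := by
      rw [← Finset.sdiff_eq_empty_iff_subset, ← Finset.card_eq_zero]; exact h
    have : B = A := Finset.eq_of_subset_of_card_le hBA (le_of_eq hc)
    subst this
    exact ⟨1, one_mem _, by simp⟩
  | succ k ih =>
    intro A B h hc htA htB
    have hBA : (B \ A).Nonempty := by rw [← Finset.card_pos]; omega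
    obtain ⟨a, ha'⟩ := hBA
    have hAB : (A \ B).Nonempty := by
      rw [← Finset.card_pos, Finset.card_sdiff_comm hc, h]; omega
    obtain ⟨b, hb'⟩ := hAB
    rw [Finset.mem_sdiff] at ha' hb'
    obtain ⟨haB, haA⟩ := ha'
    obtain ⟨hbA, hbB⟩ := hb'
    have hab : a ≠ b := fun h => haA (h ▸ hbA)
    have hat : a ≠ t := fun h => htB (h ▸ haB)
    have hbt : b ≠ t := fun h => htA (h ▸ hbA)
    set s := Equiv.swap a b with hs
    have hB' : B.image s = insert b (B.erase a) := by
      ext z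
      simp only [Finset.mem_image, Finset.mem_insert, Finset.mem_erase]
      constructor
      · rintro ⟨y, hy, rfl⟩
        by_cases hya : y = a
        · left; rw [hya]; exact Equiv.swap_apply_left a b
        · have hyb : y ≠ b := fun h => hbB (h ▸ hy)
          rw [Equiv.swap_apply_of_ne_of_ne hya hyb]
          exact Or.inr ⟨hya, hy⟩
      · rintro (hzb | ⟨hza, hz⟩)
        · exact ⟨a, haB, hzb ▸ Equiv.swap_apply_left a b⟩
        · have hzb : z ≠ b := fun h => hbB (h ▸ hz)
          exact ⟨z, hz, Equiv.swap_apply_of_ne_of_ne hza hzb⟩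
    have hsd : B.image s \ A = (B \ A).erase a := by
      rw [hB']
      ext z
      simp only [Finset.mem_sdiff, Finset.mem_insert, Finset.mem_erase]
      constructor
      · rintro ⟨rfl | ⟨h1, h2⟩, h3⟩
        · exact absurd hbA h3
        · exact ⟨h1, h2, h3⟩
      · rintro ⟨h1, h2, h3⟩
        exact ⟨Or.inr ⟨h1, h2⟩, h3⟩
    have hcard' : (B.image s \ A).card = k := by
      rw [hsd, Finset.card_erase_of_mem (Finset.mem_sdiff.mpr ⟨haB, haA⟩), h]
      omega
    have hcB' : A.card = (B.image s).card := by
      rw [Finset.card_image_of_injective _ (Equiv.injective s)]; exact hc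
    have htB' : t ∉ B.image s := by
      simp only [Finset.mem_image, not_exists]
      rintro y ⟨hy, hyt⟩
      have : y = t := by
        have := congrArg s hyt
        rwa [← Equiv.Perm.mul_apply, hs, Equiv.swap_mul_self,
          Equiv.Perm.one_apply, Equiv.swap_apply_of_ne_of_ne hat.symm hbt.symm] at this
      exact htB (this ▸ hy)
    obtain ⟨x', hx'mem, hx'⟩ := ih A (B.image s) hcard' hcB' htA htB'
    have h1 : Equiv.swap a t ∈ pstab A := by
      rw [mem_pstab]
      intro x hx
      exact Equiv.swap_apply_of_ne_of_ne (fun h => haA (h ▸ hx)) (fun h => htA (h ▸ hx))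
    have h2 : Equiv.swap t b ∈ pstab B := by
      rw [mem_pstab]
      intro x hx
      exact Equiv.swap_apply_of_ne_of_ne (fun h => htB (h ▸ hx)) (fun h => hbB (h ▸ hx))
    have hsJ : s ∈ pstab A ⊔ pstab B := by
      have hseq : s = Equiv.swap a t * Equiv.swap t b * (Equiv.swap a t)⁻¹ := by
        rw [← Equiv.swap_apply_apply, Equiv.swap_apply_right,
          Equiv.swap_apply_of_ne_of_ne hab.symm hbt]
      rw [hseq]
      exact mul_mem (mul_mem (Subgroup.mem_sup_left h1) (Subgroup.mem_sup_right h2))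
        (inv_mem (Subgroup.mem_sup_left h1))
    have hJ' : pstab A ⊔ pstab (B.image s) ≤ pstab A ⊔ pstab B :=
      sup_le le_sup_left (pstab_smul_le hsJ le_sup_right)
    refine ⟨x' * s, mul_mem (hJ' hx'mem) hsJ, ?_⟩
    rw [show ⇑(x' * s) = ⇑x' ∘ ⇑s from rfl, ← Finset.image_image, hx']


lemma conj_zpowers {G : Type*} [Group G] (c x : G) :
    MulAut.conj c • Subgroup.zpowers x = Subgroup.zpowers (c * x * c⁻¹) := by
  rw [Subgroup.pointwise_smul_def]
  exact MonoidHom.map_zpowers (MulAut.conj c).toMonoidHom x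

def swapStab (p q : Fin n) : Subgroup (Equiv.Perm (Fin n)) where
  carrier := {σ | (σ p = p ∧ σ q = q) ∨ (σ p = q ∧ σ q = p)}
  one_mem' := Or.inl ⟨rfl, rfl⟩
  mul_mem' := by
    rintro σ τ (⟨h1, h2⟩ | ⟨h1, h2⟩) (⟨h3, h4⟩ | ⟨h3, h4⟩) <;>
      simp only [Set.mem_setOf_eq, Equiv.Perm.mul_apply, h1, h2, h3, h4] <;> tauto
  inv_mem' := by
    rintro σ (⟨h1, h2⟩ | ⟨h1, h2⟩)
    · exact Or.inl ⟨Equiv.Perm.inv_eq_iff_eq.mpr h1.symm, Equiv.Perm.inv_eq_iff_eq.mpr h2.symm⟩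
    · exact Or.inr ⟨Equiv.Perm.inv_eq_iff_eq.mpr h2.symm, Equiv.Perm.inv_eq_iff_eq.mpr h1.symm⟩

lemma mem_swapStab {p q : Fin n} {σ : Equiv.Perm (Fin n)} :
    σ ∈ swapStab p q ↔ (σ p = p ∧ σ q = q) ∨ (σ p = q ∧ σ q = p) := Iff.rfl


end Stmt14Aux

theorem stmt14 (n m : ℕ) (h1 : n < 2 * m) (h2 : m < n - 1)
    (Δ : Finset (Fin n)) (hΔ : Δ.card = n - m)
    (H : Subgroup (Equiv.Perm (Fin n)))
    (hH : H = ⨅ x ∈ Δ, MulAction.stabilizer (Equiv.Perm (Fin n)) x) :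
    Pronormal H ∧ ¬ StronglyPronormal H := by
  subst hH
  show Pronormal (Stmt14Aux.pstab Δ) ∧ ¬ StronglyPronormal (Stmt14Aux.pstab Δ)
  open Stmt14Aux in
  constructor
  · intro g
    have hconj : MulAut.conj g⁻¹ • pstab Δ = pstab (Δ.image ⇑g⁻¹) := conj_pstab g⁻¹ Δ
    set B := Δ.image ⇑g⁻¹ with hB
    have hcard : Δ.card = B.card :=
      (Finset.card_image_of_injective _ (Equiv.injective _)).symm
    have hU : (Δ ∪ B).card < n := by
      have h3 := Finset.card_union_le Δ B
      have hb : B.card = n - m := by rw [← hcard, hΔ]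
      omega
    have hne : ((Δ ∪ B)ᶜ).Nonempty := by
      rw [← Finset.card_pos, Finset.card_compl, Fintype.card_fin]
      omega
    obtain ⟨t, ht⟩ := hne
    rw [Finset.mem_compl, Finset.mem_union, not_or] at ht
    obtain ⟨x, hxmem, himg⟩ := key t ((B \ Δ).card) Δ B rfl hcard ht.1 ht.2
    refine ⟨x, by rw [hconj]; exact hxmem, ?_⟩
    rw [hconj, conj_pstab]
    congr 1
    rw [← himg, Finset.image_image]
    ext z
    simp
  · intro hs
    have hn2 : 2 ≤ n - m := by omega
    obtain ⟨p, hp, q, hq, hpq⟩ := Finset.one_lt_card.mp (by omega : 1 < Δ.card)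
    have hcc : 1 < Δᶜ.card := by
      rw [Finset.card_compl, Fintype.card_fin, hΔ]; omega
    obtain ⟨a, ha, b, hb, hab⟩ := Finset.one_lt_card.mp hcc
    rw [Finset.mem_compl] at ha hb
    have hpa : p ≠ a := fun h => ha (h ▸ hp)
    have hpb : p ≠ b := fun h => hb (h ▸ hp)
    have hqa : q ≠ a := fun h => ha (h ▸ hq)
    have hqb : q ≠ b := fun h => hb (h ▸ hq)
    set K := Subgroup.zpowers (Equiv.swap a b) with hKdef
    have hK : K ≤ pstab Δ := by
      rw [hKdef, Subgroup.zpowers_le, mem_pstab]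
      intro x hx
      exact Equiv.swap_apply_of_ne_of_ne (fun h => ha (h ▸ hx)) (fun h => hb (h ▸ hx))
    set g := Equiv.swap p a * Equiv.swap q b with hgdef
    obtain ⟨x, hxmem, hle⟩ := hs K hK g
    have hga : g⁻¹ a = p := by
      rw [hgdef, mul_inv_rev, Equiv.swap_inv, Equiv.swap_inv, Equiv.Perm.mul_apply,
        Equiv.swap_apply_right, Equiv.swap_apply_of_ne_of_ne hpq hpb]
    have hgb : g⁻¹ b = q := by
      rw [hgdef, mul_inv_rev, Equiv.swap_inv, Equiv.swap_inv, Equiv.Perm.mul_apply,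
        Equiv.swap_apply_of_ne_of_ne hpb.symm hab.symm, Equiv.swap_apply_right]
    have hKg : MulAut.conj g⁻¹ • K = Subgroup.zpowers (Equiv.swap p q) := by
      rw [hKdef, conj_zpowers]
      congr 1
      rw [← Equiv.swap_apply_apply, hga, hgb]
    rw [hKg] at hxmem hle
    have hxN : x ∈ swapStab p q := by
      refine (sup_le ?_ ?_ : pstab Δ ⊔ Subgroup.zpowers (Equiv.swap p q) ≤ swapStab p q) hxmem
      · intro σ hσ
        exact Or.inl ⟨mem_pstab.mp hσ p hp, mem_pstab.mp hσ q hq⟩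
      · rw [Subgroup.zpowers_le]
        exact Or.inr ⟨Equiv.swap_apply_left p q, Equiv.swap_apply_right p q⟩
    have hxpΔ : x⁻¹ p ∈ Δ := by
      rcases (inv_mem hxN : x⁻¹ ∈ swapStab p q) with ⟨h1, _⟩ | ⟨h1, _⟩ <;> rw [h1] <;>
        assumption
    have hmem : Equiv.swap (x⁻¹ p) (x⁻¹ q) ∈
        MulAut.conj x⁻¹ • Subgroup.zpowers (Equiv.swap p q) := by
      rw [conj_zpowers, Equiv.swap_apply_apply]
      exact Subgroup.mem_zpowers _
    have hfix := mem_pstab.mp (hle hmem) (x⁻¹ p) hxpΔ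
    rw [Equiv.swap_apply_left] at hfix
    exact hpq ((Equiv.injective x⁻¹) hfix).symm
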